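/- Let K^{a,b} ⊆ ℝ^{b−a+1} be the cone of convex sequences based on points x_a < ⋯ < x_b, let A^{a,b} = span{𝟙, (x_a,…,x_b)} be the subspace of affine sequences, and let θ, ξ ∈ ℝ^{b−a+1} with Y = θ + ξ. Let θ̌ be the projection of Y onto K^{a,b} and θ̄ the orthogonal projection of θ onto A^{a,b}. Then ‖Y − θ̌‖² − ‖ξ‖² ≥ 2⟨ξ, θ − θ̄⟩ − 2‖θ̌ − θ‖² − ‖θ − θ̄‖². -/

import Mathlib

/-- Inequality (S19) from Step 3 of the proof of Theorem 4 of the paper: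
for `Y = θ + ξ`, the projection `θ̌` of `Y` onto the cone of convex sequences
and the orthogonal projection `θ̄` of `θ` onto the subspace of affine sequences
satisfy `‖Y − θ̌‖² − ‖ξ‖² ≥ 2⟨ξ, θ − θ̄⟩ − 2‖θ̌ − θ‖² − ‖θ − θ̄‖²`. -/
theorem stmt19 (N : ℕ) (x θ ξ θc θb : ℕ → ℝ)
    (hx : ∀ i, i + 1 < N → x i < x (i + 1)) :
    let convseq : (ℕ → ℝ) → Prop := fun v =>
      ∀ i, 1 ≤ i → i + 1 < N →
        (v i - v (i - 1)) / (x i - x (i - 1)) ≤ (v (i + 1) - v i) / (x (i + 1) - x i)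
    ∀ (hθc : convseq θc)
      (hθcmin : ∀ v, convseq v →
        ∑ i ∈ Finset.range N, ((θ i + ξ i) - θc i) ^ 2 ≤
          ∑ i ∈ Finset.range N, ((θ i + ξ i) - v i) ^ 2)
      (hθbaff : ∃ c₀ c₁ : ℝ, ∀ i < N, θb i = c₀ + c₁ * x i)
      (hθbmin : ∀ c₀ c₁ : ℝ,
        ∑ i ∈ Finset.range N, (θ i - θb i) ^ 2 ≤
          ∑ i ∈ Finset.range N, (θ i - (c₀ + c₁ * x i)) ^ 2),
      2 * (∑ i ∈ Finset.range N, ξ i * (θ i - θb i)) -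
          2 * (∑ i ∈ Finset.range N, (θc i - θ i) ^ 2) -
          (∑ i ∈ Finset.range N, (θ i - θb i) ^ 2) ≤
        (∑ i ∈ Finset.range N, ((θ i + ξ i) - θc i) ^ 2) -
          (∑ i ∈ Finset.range N, (ξ i) ^ 2) := by
  intro convseq hθc hθcmin hθbaff hθbmin
  obtain ⟨c₀, c₁, hθb⟩ := hθbaff
  set S : ℝ := ∑ i ∈ Finset.range N, ((θ i + ξ i) - θc i) * (θc i - θb i) with hSdef
  set C : ℝ := ∑ i ∈ Finset.range N, (θc i - θb i) ^ 2 with hCdef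
  have hCnonneg : 0 ≤ C := Finset.sum_nonneg fun i _ => sq_nonneg _
  -- key: for all η ≥ 0, 2*η*S ≤ η^2*C
  have hkey : ∀ η : ℝ, 0 ≤ η → 2 * η * S ≤ η ^ 2 * C := by
    intro η hη
    have hv : convseq (fun i => θc i + η * (θc i - θb i)) := by
      intro i h1 hi
      have hiN : i < N := by omega
      have hi1N : i - 1 < N := by omega
      have hi1 : i - 1 + 1 = i := by omega
      have hd1 : x (i - 1) < x i := by
        have := hx (i - 1) (by omega)
        rwa [hi1] at this
      have hd2 : x i < x (i + 1) := hx i hi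
      have hb1 : θb (i - 1) = c₀ + c₁ * x (i - 1) := hθb _ hi1N
      have hb2 : θb i = c₀ + c₁ * x i := hθb _ hiN
      have hb3 : θb (i + 1) = c₀ + c₁ * x (i + 1) := hθb _ hi
      have h := hθc i h1 hi
      rw [div_le_div_iff₀ (by linarith) (by linarith)] at h ⊢
      simp only []
      rw [hb1, hb2, hb3]
      nlinarith [mul_le_mul_of_nonneg_left h (by linarith : (0:ℝ) ≤ 1 + η),
        sq_nonneg (x i - x (i-1)), sq_nonneg (x (i+1) - x i)]
    have hmin := hθcmin _ hv
    have hexp : ∑ i ∈ Finset.range N, ((θ i + ξ i) - (θc i + η * (θc i - θb i))) ^ 2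
        = (∑ i ∈ Finset.range N, ((θ i + ξ i) - θc i) ^ 2) - 2 * η * S + η ^ 2 * C := by
      rw [hSdef, hCdef, Finset.mul_sum, Finset.mul_sum, ← Finset.sum_sub_distrib,
        ← Finset.sum_add_distrib]
      exact Finset.sum_congr rfl fun i _ => by ring
    rw [hexp] at hmin
    linarith
  -- deduce S ≤ 0
  have hS : S ≤ 0 := by
    by_contra h
    push_neg at h
    rcases eq_or_lt_of_le hCnonneg with hC | hC
    · have := hkey 1 zero_le_one
      nlinarith
    · have := hkey (S / C) (le_of_lt (div_pos h hC))
      have h2 : (S / C) ^ 2 * C = S ^ 2 / C := by field_simp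
      rw [h2] at this
      have h3 := mul_le_mul_of_nonneg_right this hC.le
      have h4 : S / C * C = S := div_mul_cancel₀ _ hC.ne'
      have h5 : S ^ 2 / C * C = S ^ 2 := div_mul_cancel₀ _ hC.ne'
      nlinarith [h3, h4, h5, h]
  have hQ : (0:ℝ) ≤ ∑ i ∈ Finset.range N, (θc i + θb i - 2 * θ i) ^ 2 :=
    Finset.sum_nonneg fun i _ => sq_nonneg _
  -- total-sum identity
  have hid : ∑ i ∈ Finset.range N, (((θ i + ξ i) - θc i) ^ 2 - ξ i ^ 2
        - 2 * (ξ i * (θ i - θb i)) + 2 * ((θc i - θ i) ^ 2) + (θ i - θb i) ^ 2)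
      = ∑ i ∈ Finset.range N, ((-2) * (((θ i + ξ i) - θc i) * (θc i - θb i))
        + (θc i + θb i - 2 * θ i) ^ 2) :=
    Finset.sum_congr rfl fun i _ => by ring
  simp only [Finset.sum_add_distrib, Finset.sum_sub_distrib, ← Finset.mul_sum] at hid
  rw [← hSdef] at hid
  linarith
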